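/- Let R be a ring, P a prime two-sided ideal of R, and F a generalized derivation of R with associated derivation d. If F(x)F(y) − yx ∈ P for all x, y ∈ R, or F(x)F(y) + yx ∈ P for all x, y ∈ R, then either the quotient ring R/P is a commutative integral domain, or d(x) ∈ P for all x ∈ R. -/

import Mathlib

private lemma quot_goal {R : Type*} [Ring R] (P : TwoSidedIdeal R)
    (hP : P ≠ ⊤)
    (hprime : ∀ x y : R, (∀ r : R, x * r * y ∈ P) → x ∈ P ∨ y ∈ P)
    (hcomm : ∀ x t : R, x * t - t * x ∈ P) :
    (∀ a b : P.ringCon.Quotient, a * b = b * a) ∧ IsDomain P.ringCon.Quotient := by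
  have hone : (1 : R) ∉ P := fun h1 => hP (P.eq_top h1)
  constructor
  · intro a b
    induction a using Quotient.ind with
    | _ x =>
    induction b using Quotient.ind with
    | _ t =>
    show (x : P.ringCon.Quotient) * t = (t : P.ringCon.Quotient) * x
    rw [← RingCon.coe_mul, ← RingCon.coe_mul, RingCon.eq, P.rel_iff]
    exact hcomm x t
  · have hnt : Nontrivial P.ringCon.Quotient := by
      refine ⟨(0 : R), (1 : R), fun h0 => ?_⟩
      rw [RingCon.eq, P.rel_iff] at h0
      exact hone (by simpa using P.neg_mem h0)
    have hnzd : NoZeroDivisors P.ringCon.Quotient := by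
      constructor
      intro a b hab
      induction a using Quotient.ind with
      | _ x =>
      induction b using Quotient.ind with
      | _ y =>
      have hab' : (x : P.ringCon.Quotient) * y = ((0 : R) : P.ringCon.Quotient) := by
        exact hab
      rw [← RingCon.coe_mul, RingCon.eq, P.rel_iff] at hab'
      have hxy : x * y ∈ P := by simpa using hab'
      have : x ∈ P ∨ y ∈ P := by
        refine hprime x y fun r => ?_
        have h1 : (x * r - r * x) * y ∈ P := P.mul_mem_right _ _ (hcomm x r)
        have h2 : r * (x * y) ∈ P := P.mul_mem_left _ _ hxy
        have : (x * r - r * x) * y + r * (x * y) = x * r * y := by noncomm_ring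
        rw [← this]; exact P.add_mem h1 h2
      rcases this with hx | hy
      · left
        show ((x : R) : P.ringCon.Quotient) = ((0 : R) : P.ringCon.Quotient)
        rw [RingCon.eq, P.rel_iff]
        simpa using hx
      · right
        show ((y : R) : P.ringCon.Quotient) = ((0 : R) : P.ringCon.Quotient)
        rw [RingCon.eq, P.rel_iff]
        simpa using hy
    exact NoZeroDivisors.to_isDomain _

theorem stmt_11 {R : Type*} [Ring R] (P : TwoSidedIdeal R)
    (hP : P ≠ ⊤)
    (hprime : ∀ x y : R, (∀ r : R, x * r * y ∈ P) → x ∈ P ∨ y ∈ P)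
    (d F : R → R)
    (hd_add : ∀ x y : R, d (x + y) = d x + d y)
    (hd_mul : ∀ x y : R, d (x * y) = d x * y + x * d y)
    (hF_add : ∀ x y : R, F (x + y) = F x + F y)
    (hF_mul : ∀ x y : R, F (x * y) = F x * y + x * d y)
    (h : (∀ x y : R, F x * F y - y * x ∈ P) ∨ (∀ x y : R, F x * F y + y * x ∈ P)) :
    ((∀ a b : P.ringCon.Quotient, a * b = b * a) ∧ IsDomain P.ringCon.Quotient) ∨ (∀ x : R, d x ∈ P) := by
  by_cases hd : ∀ x : R, d x ∈ P
  · exact Or.inr hd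
  push_neg at hd
  obtain ⟨z₀, hz₀⟩ := hd
  -- Claim 1: F x * y * d z - ε * y*(z*x - x*z) ∈ P (sign depending on case)
  -- L1: (F x * t - t * F x) * y * d z ∈ P in both cases.
  have L1 : ∀ x t y z : R, (F x * t - t * F x) * y * d z ∈ P := by
    rcases h with h | h
    · have claim1 : ∀ x y z : R, F x * (y * d z) - y * (z * x - x * z) ∈ P := by
        intro x y z
        have h1 : F x * F (y * z) - (y * z) * x ∈ P := h x (y * z)
        rw [hF_mul] at h1
        have h2 : (F x * F y - y * x) * z ∈ P := P.mul_mem_right _ _ (h x y)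
        have e : (F x * (F y * z + y * d z) - y * z * x) - (F x * F y - y * x) * z
            = F x * (y * d z) - y * (z * x - x * z) := by noncomm_ring
        rw [← e]; exact P.sub_mem h1 h2
      intro x t y z
      have h1 := claim1 x (t * y) z
      have h2 : t * (F x * (y * d z) - y * (z * x - x * z)) ∈ P :=
        P.mul_mem_left _ _ (claim1 x y z)
      have e : (F x * (t * y * d z) - t * y * (z * x - x * z))
          - t * (F x * (y * d z) - y * (z * x - x * z))
          = (F x * t - t * F x) * y * d z := by noncomm_ring
      rw [← e]; exact P.sub_mem h1 h2
    · have claim1 : ∀ x y z : R, F x * (y * d z) + y * (z * x - x * z) ∈ P := by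
        intro x y z
        have h1 : F x * F (y * z) + (y * z) * x ∈ P := h x (y * z)
        rw [hF_mul] at h1
        have h2 : (F x * F y + y * x) * z ∈ P := P.mul_mem_right _ _ (h x y)
        have e : (F x * (F y * z + y * d z) + y * z * x) - (F x * F y + y * x) * z
            = F x * (y * d z) + y * (z * x - x * z) := by noncomm_ring
        rw [← e]; exact P.sub_mem h1 h2
      intro x t y z
      have h1 := claim1 x (t * y) z
      have h2 : t * (F x * (y * d z) + y * (z * x - x * z)) ∈ P :=
        P.mul_mem_left _ _ (claim1 x y z)
      have e : (F x * (t * y * d z) + t * y * (z * x - x * z))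
          - t * (F x * (y * d z) + y * (z * x - x * z))
          = (F x * t - t * F x) * y * d z := by noncomm_ring
      rw [← e]; exact P.sub_mem h1 h2
  -- F is central mod P
  have hc : ∀ x t : R, F x * t - t * F x ∈ P := by
    intro x t
    rcases hprime (F x * t - t * F x) (d z₀) (fun r => L1 x t r z₀) with h' | h'
    · exact h'
    · exact absurd h' hz₀
  -- products y*x are central mod P
  have hcomm : ∀ x t : R, x * t - t * x ∈ P := by
    have hFF : ∀ x y t : R, (F x * F y) * t - t * (F x * F y) ∈ P := by
      intro x y t
      have e : (F x * F y) * t - t * (F x * F y)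
          = F x * (F y * t - t * F y) + (F x * t - t * F x) * F y := by noncomm_ring
      rw [e]
      exact P.add_mem (P.mul_mem_left _ _ (hc y t)) (P.mul_mem_right _ _ (hc x t))
    have hyx : ∀ x y t : R, (y * x) * t - t * (y * x) ∈ P := by
      intro x y t
      rcases h with h | h
      · have hw : y * x - F x * F y ∈ P := by simpa using P.neg_mem (h x y)
        have h1 : (y * x - F x * F y) * t ∈ P := P.mul_mem_right _ _ hw
        have h2 : t * (y * x - F x * F y) ∈ P := P.mul_mem_left _ _ hw
        have e : (y * x) * t - t * (y * x)
            = ((y * x - F x * F y) * t - t * (y * x - F x * F y))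
              + ((F x * F y) * t - t * (F x * F y)) := by noncomm_ring
        rw [e]; exact P.add_mem (P.sub_mem h1 h2) (hFF x y t)
      · have hw : y * x + F x * F y ∈ P := by
          have := h x y
          rw [add_comm]; exact this
        have h1 : (y * x + F x * F y) * t ∈ P := P.mul_mem_right _ _ hw
        have h2 : t * (y * x + F x * F y) ∈ P := P.mul_mem_left _ _ hw
        have e : (y * x) * t - t * (y * x)
            = ((y * x + F x * F y) * t - t * (y * x + F x * F y))
              - ((F x * F y) * t - t * (F x * F y)) := by noncomm_ring
        rw [e]; exact P.sub_mem (P.sub_mem h1 h2) (hFF x y t)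
    intro x t
    have := hyx x 1 t
    simpa using this
  exact Or.inl (quot_goal P hP hprime hcomm)
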